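/- arXiv:1804.10405 — 5 statements merged into one kernel-verified Lean document; each statement's English description precedes it below -/
import Mathlib

section
/- Let (b_n) be a sequence of positive real numbers bounded away from 0 such that ∑_n b_n⁻¹ = ∞. Then there exist non-negative real numbers (a_{n,k})_{n,k ∈ ℕ} such that: (i) for every n the sequence (a_{n,k})_k has finite support, and min{k : a_{n,k} ≠ 0} → ∞ as n → ∞; (ii) ∑_k a_{n,k} = 1 for every n, and ∑_{n,k} a_{n,k}² < ∞; (iii) ∑_k a_{n,k}² b_k → 0 as n → ∞. -/
/-- **Lemma.** Let `(b_n)` be a sequence of positive numbers bounded away from `0` with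
`∑_n b_n⁻¹ = ∞`. Then there are non-negative numbers `(a_{n,k})` such that
(i) each `(a_{n,k})_k` has finite support and `min {k : a_{n,k} ≠ 0} → ∞`;
(ii) `∑_k a_{n,k} = 1` for every `n` and `∑_{n,k} a_{n,k}² < ∞`;
(iii) `∑_k a_{n,k}² b_k → 0`. -/
theorem exists_coefficient_array
    (b : ℕ → ℝ) (δ : ℝ) (hδ : 0 < δ) (hb : ∀ n, δ ≤ b n)
    (hdiv : ¬ Summable fun n => (b n)⁻¹) :
    ∃ a : ℕ → ℕ → ℝ,
      (∀ n k, 0 ≤ a n k) ∧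
      (∀ n, (Function.support (a n)).Finite) ∧
      (∀ M : ℕ, ∀ᶠ n in Filter.atTop, ∀ k < M, a n k = 0) ∧
      (∀ n, ∑' k, a n k = 1) ∧
      (Summable fun p : ℕ × ℕ => a p.1 p.2 ^ 2) ∧
      Filter.Tendsto (fun n => ∑' k, a n k ^ 2 * b k) Filter.atTop (nhds 0) := by
  have hbpos : ∀ k, 0 < b k := fun k => hδ.trans_le (hb k)
  have hinv_nonneg : ∀ k, 0 ≤ (b k)⁻¹ := fun k => inv_nonneg.2 (hbpos k).le
  rw [not_summable_iff_tendsto_nat_atTop_of_nonneg hinv_nonneg] at hdiv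
  -- key: for any N, c there is M > N with sum over Ico N M at least c
  have key : ∀ N : ℕ, ∀ c : ℝ, ∃ M : ℕ, N < M ∧ c ≤ ∑ k ∈ Finset.Ico N M, (b k)⁻¹ := by
    intro N c
    obtain ⟨M, hM1, hM2⟩ :=
      ((hdiv.eventually_ge_atTop (c + ∑ k ∈ Finset.range N, (b k)⁻¹)).and
        (Filter.eventually_ge_atTop (N + 1))).exists
    refine ⟨M, hM2, ?_⟩
    have hNM : N ≤ M := Nat.le_of_succ_le hM2
    rw [Finset.sum_Ico_eq_sub _ hNM]
    linarith
  choose F hF1 hF2 using key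
  set m : ℕ → ℕ := fun n => Nat.rec 0 (fun k ih => F ih (2 ^ k)) n with hm
  have hmsucc : ∀ n, m (n + 1) = F (m n) (2 ^ n) := fun n => rfl
  set S : ℕ → ℝ := fun n => ∑ k ∈ Finset.Ico (m n) (m (n + 1)), (b k)⁻¹ with hSdef
  have hS : ∀ n, (2 : ℝ) ^ n ≤ S n := fun n => by
    simpa [hSdef, hmsucc] using hF2 (m n) (2 ^ n)
  have hSpos : ∀ n, 0 < S n := fun n => lt_of_lt_of_le (by positivity) (hS n)
  have hmlt : ∀ n, m n < m (n + 1) := fun n => by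
    rw [hmsucc]; exact hF1 (m n) (2 ^ n)
  have hmn : ∀ n, n ≤ m n := fun n => by
    induction n with
    | zero => exact Nat.zero_le _
    | succ k ih => exact Nat.succ_le_of_lt (lt_of_le_of_lt ih (hmlt k))
  set a : ℕ → ℕ → ℝ := fun n k =>
    if k ∈ Finset.Ico (m n) (m (n + 1)) then (b k)⁻¹ / S n else 0 with ha
  have hzero : ∀ n, ∀ k ∉ Finset.Ico (m n) (m (n + 1)), a n k = 0 := by
    intro n k hk; simp only [ha, if_neg hk]
  have hanonneg : ∀ n k, 0 ≤ a n k := by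
    intro n k
    simp only [ha]
    split
    · exact div_nonneg (hinv_nonneg k) (hSpos n).le
    · exact le_refl 0
  have htsum1 : ∀ n, ∑' k, a n k = 1 := by
    intro n
    rw [tsum_eq_sum (hzero n)]
    have : ∑ k ∈ Finset.Ico (m n) (m (n + 1)), a n k
        = ∑ k ∈ Finset.Ico (m n) (m (n + 1)), (b k)⁻¹ / S n :=
      Finset.sum_congr rfl (fun k hk => by simp only [ha, if_pos hk])
    rw [this, ← Finset.sum_div]
    exact div_self (hSpos n).ne'
  -- the squared sums
  have hsq_eq : ∀ n, ∑' k, a n k ^ 2 = ∑ k ∈ Finset.Ico (m n) (m (n + 1)), a n k ^ 2 := by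
    intro n
    exact tsum_eq_sum (fun k hk => by rw [hzero n k hk]; ring)
  have hsq_le : ∀ n, ∑' k, a n k ^ 2 ≤ δ⁻¹ * (2⁻¹ : ℝ) ^ n := by
    intro n
    rw [hsq_eq n]
    have h1 : ∀ k, a n k ≤ δ⁻¹ / S n := by
      intro k
      simp only [ha]
      split
      · exact div_le_div_of_nonneg_right (inv_anti₀ hδ (hb k)) (hSpos n).le
      · exact div_nonneg (by positivity) (hSpos n).le
    calc ∑ k ∈ Finset.Ico (m n) (m (n + 1)), a n k ^ 2
        ≤ ∑ k ∈ Finset.Ico (m n) (m (n + 1)), δ⁻¹ / S n * a n k := by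
          refine Finset.sum_le_sum (fun k _ => ?_)
          rw [sq]
          exact mul_le_mul_of_nonneg_right (h1 k) (hanonneg n k)
      _ = δ⁻¹ / S n * ∑ k ∈ Finset.Ico (m n) (m (n + 1)), a n k := by
          rw [Finset.mul_sum]
      _ = δ⁻¹ / S n := by
          rw [← tsum_eq_sum (L := SummationFilter.unconditional ℕ) (hzero n), htsum1 n, mul_one]
      _ ≤ δ⁻¹ * (2⁻¹ : ℝ) ^ n := by
          rw [div_eq_mul_inv]
          refine mul_le_mul_of_nonneg_left ?_ (by positivity)
          rw [inv_pow]
          exact inv_anti₀ (by positivity) (hS n)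
  have hsq_nonneg : ∀ n, 0 ≤ ∑' k, a n k ^ 2 := by
    intro n
    exact tsum_nonneg (fun k => sq_nonneg _)
  have hsummable_inner : ∀ n, Summable fun k => a n k ^ 2 := by
    intro n
    exact summable_of_ne_finset_zero (s := Finset.Ico (m n) (m (n + 1)))
      (fun k hk => by rw [hzero n k hk]; ring)
  have hsummable_outer : Summable fun n => ∑' k, a n k ^ 2 := by
    refine Summable.of_nonneg_of_le hsq_nonneg hsq_le ?_
    exact (summable_geometric_of_lt_one (by norm_num) (by norm_num)).mul_left δ⁻¹
  have hsumprod : Summable fun p : ℕ × ℕ => a p.1 p.2 ^ 2 := by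
    rw [summable_prod_of_nonneg (fun p => sq_nonneg _)]
    exact ⟨fun n => hsummable_inner n, hsummable_outer⟩
  -- the weighted squared sums
  have hw_eq : ∀ n, ∑' k, a n k ^ 2 * b k = (S n)⁻¹ := by
    intro n
    rw [tsum_eq_sum (s := Finset.Ico (m n) (m (n + 1)))
      (fun k hk => by rw [hzero n k hk]; ring)]
    have : ∑ k ∈ Finset.Ico (m n) (m (n + 1)), a n k ^ 2 * b k
        = ∑ k ∈ Finset.Ico (m n) (m (n + 1)), (b k)⁻¹ / S n ^ 2 := by
      refine Finset.sum_congr rfl (fun k hk => ?_)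
      simp only [ha, if_pos hk]
      rw [div_pow, div_mul_eq_mul_div, sq ((b k)⁻¹), mul_assoc,
        inv_mul_cancel₀ (hbpos k).ne', mul_one]
    rw [this, ← Finset.sum_div]
    show S n / S n ^ 2 = (S n)⁻¹
    rw [sq, div_eq_mul_inv, mul_inv, ← mul_assoc, mul_inv_cancel₀ (hSpos n).ne', one_mul]
  refine ⟨a, hanonneg, ?_, ?_, htsum1, hsumprod, ?_⟩
  · intro n
    exact Set.Finite.subset (Finset.Ico (m n) (m (n + 1))).finite_toSet
      (fun k hk => by by_contra h; exact hk (hzero n k (by simpa using h)))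
  · intro M
    filter_upwards [Filter.eventually_ge_atTop M] with n hn k hk
    refine hzero n k ?_
    simp only [Finset.mem_Ico, not_and_or, not_le]
    left
    exact lt_of_lt_of_le (lt_of_lt_of_le hk hn) (hmn n)
  · simp only [hw_eq]
    refine tendsto_of_tendsto_of_tendsto_of_le_of_le (g := fun _ => (0 : ℝ))
      (h := fun n => (2⁻¹ : ℝ) ^ n) tendsto_const_nhds
      (tendsto_pow_atTop_nhds_zero_of_lt_one (by norm_num) (by norm_num))
      (fun n => inv_nonneg.2 (hSpos n).le)
      (fun n => ?_)
    show (S n)⁻¹ ≤ 2⁻¹ ^ n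
    rw [inv_pow]
    exact inv_anti₀ (by positivity) (hS n)
end

section
/- Let μ be a Borel probability measure on a compact metric space X and define the probability space Ω = X^ℕ with P = μ^ℕ. Let (a_{n,k})_{n,k ∈ ℕ} be non-negative real numbers such that ∑_k a_{n,k} = 1 for every n and ∑_{n,k} a_{n,k}² < ∞. For ω = (ω_k) ∈ Ω let μ_n^ω = ∑_k a_{n,k} δ_{ω_k}. Then for P-almost every ω, μ_n^ω → μ in the weak-* topology as n → ∞. -/
open MeasureTheory ENNReal Filter

set_option maxHeartbeats 1000000
open MeasureTheory ENNReal Filter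

lemma aux_key {X : Type*} [MetricSpace X] [CompactSpace X] [MeasurableSpace X] [BorelSpace X]
    (μ : Measure X) [IsProbabilityMeasure μ]
    (P : Measure (ℕ → X)) [IsProbabilityMeasure P]
    (hiid : ProbabilityTheory.iIndepFun
      (fun k (ω : ℕ → X) => ω k) P)
    (hlaw : ∀ k, P.map (fun ω => ω k) = μ)
    (a : ℕ → ℕ → ℝ) (ha0 : ∀ n k, 0 ≤ a n k) (ha1 : ∀ n, ∑' k, a n k = 1)
    (ha2 : Summable fun p : ℕ × ℕ => a p.1 p.2 ^ 2) (f : C(X, ℝ)) :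
    ∀ᵐ ω ∂P, Filter.Tendsto (fun n => ∑' k, a n k * f (ω k))
      Filter.atTop (nhds (∫ x, f x ∂μ)) := by
  classical
  have hsum : ∀ n, Summable (a n) := by
    intro n
    by_contra h
    have h1 := ha1 n
    rw [tsum_eq_zero_of_not_summable h] at h1
    norm_num at h1
  set m : ℝ := ∫ x, f x ∂μ with hm
  set g : X → ℝ := fun x => f x - m with hgdef
  have hgc : Continuous g := f.continuous.sub continuous_const
  have hgm : Measurable g := hgc.measurable
  set C : ℝ := ‖f‖ + |m| with hC
  have hC0 : 0 ≤ C := by positivity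
  have hgb : ∀ x, |g x| ≤ C := by
    intro x
    calc |g x| ≤ |f x| + |m| := abs_sub _ _
    _ ≤ ‖f‖ + |m| := by
        have := f.norm_coe_le_norm x
        simp only [Real.norm_eq_abs] at this
        linarith
  have hfint : Integrable f μ := by
    refine (integrable_const ‖f‖).mono' f.continuous.measurable.aestronglyMeasurable ?_
    exact Eventually.of_forall fun x => f.norm_coe_le_norm x
  have hg0 : ∫ x, g x ∂μ = 0 := by
    simp [hgdef, integral_sub hfint (integrable_const m), measure_univ, ← hm]
  -- coordinates
  have hXm : ∀ k, Measurable fun ω : ℕ → X => g (ω k) :=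
    fun k => hgm.comp (measurable_pi_apply k)
  have hmap : ∀ k (u : X → ℝ), Measurable u → ∫ ω, u (ω k) ∂P = ∫ x, u x ∂μ := by
    intro k u hu
    rw [← hlaw k, integral_map (measurable_pi_apply k).aemeasurable
      hu.aestronglyMeasurable]
  have hgP : ∀ k, ∫ ω, g (ω k) ∂P = 0 := fun k => by rw [hmap k g hgm, hg0]
  set V : ℝ := ∫ x, g x ^ 2 ∂μ with hV
  have hV0 : 0 ≤ V := integral_nonneg fun x => sq_nonneg _
  have hgP2 : ∀ k, ∫ ω, g (ω k) ^ 2 ∂P = V := fun k => by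
    rw [hmap k (fun x => g x ^ 2) (hgm.pow_const 2)]
  -- T
  set T : ℕ → (ℕ → X) → ℝ := fun n ω => ∑' k, a n k * g (ω k) with hT
  have hsummg : ∀ n (ω : ℕ → X), Summable fun k => a n k * g (ω k) := by
    intro n ω
    refine Summable.of_norm_bounded ((hsum n).mul_right C) ?_
    intro k
    rw [Real.norm_eq_abs, abs_mul, abs_of_nonneg (ha0 n k)]
    exact mul_le_mul_of_nonneg_left (hgb _) (ha0 n k)
  have hTb : ∀ n ω, |T n ω| ≤ C := by
    intro n ω
    have : ‖∑' k, a n k * g (ω k)‖ ≤ (∑' k, a n k) * C := by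
      refine tsum_of_norm_bounded (((hsum n).hasSum).mul_right C) ?_
      intro k
      rw [Real.norm_eq_abs, abs_mul, abs_of_nonneg (ha0 n k)]
      exact mul_le_mul_of_nonneg_left (hgb _) (ha0 n k)
    rw [ha1 n, one_mul] at this
    simpa using this
  have hTmeas : ∀ n, Measurable (T n) := by
    intro n
    apply measurable_of_tendsto_metrizable
      (f := fun K ω => ∑ k ∈ Finset.range K, a n k * g (ω k))
    · intro K
      exact Finset.measurable_sum _ fun k _ => (hXm k).const_mul _
    · rw [tendsto_pi_nhds]
      intro ω
      exact ((hsummg n ω).hasSum).tendsto_sum_nat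
  -- helper: lintegral of nnnorm of bounded function
  have hlb : ∀ (u : (ℕ → X) → ℝ) (c : ℝ), (∀ ω, |u ω| ≤ c) →
      ∫⁻ ω, (‖u ω‖₊ : ℝ≥0∞) ∂P ≤ ENNReal.ofReal c := by
    intro u c hu
    calc ∫⁻ ω, (‖u ω‖₊ : ℝ≥0∞) ∂P ≤ ∫⁻ _, ENNReal.ofReal c ∂P := by
          refine lintegral_mono fun ω => ?_
          rw [← ofReal_coe_nnreal, coe_nnnorm]
          exact ENNReal.ofReal_le_ofReal (hu ω)
    _ = ENNReal.ofReal c := by simp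
  -- variance identity
  have hVar : ∀ n, ∫ ω, (T n ω) ^ 2 ∂P = (∑' k, a n k ^ 2) * V := by
    intro n
    have hnorm : ∀ ω : ℕ → X, Summable fun k => ‖a n k * g (ω k)‖ := by
      intro ω
      refine Summable.of_nonneg_of_le (fun k => norm_nonneg _) ?_ ((hsum n).mul_right C)
      intro k
      rw [Real.norm_eq_abs, abs_mul, abs_of_nonneg (ha0 n k)]
      exact mul_le_mul_of_nonneg_left (hgb _) (ha0 n k)
    have hsq : ∀ ω : ℕ → X, (T n ω) ^ 2 =
        ∑' p : ℕ × ℕ, (a n p.1 * g (ω p.1)) * (a n p.2 * g (ω p.2)) := by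
      intro ω
      rw [sq, hT]
      exact tsum_mul_tsum_of_summable_norm (hnorm ω) (hnorm ω)
    have hFm : ∀ p : ℕ × ℕ, Measurable fun ω : ℕ → X =>
        (a n p.1 * g (ω p.1)) * (a n p.2 * g (ω p.2)) :=
      fun p => ((hXm p.1).const_mul _).mul ((hXm p.2).const_mul _)
    have hFb : ∀ (p : ℕ × ℕ) (ω : ℕ → X),
        |(a n p.1 * g (ω p.1)) * (a n p.2 * g (ω p.2))| ≤ (a n p.1 * C) * (a n p.2 * C) := by
      intro p ω
      rw [abs_mul, abs_mul, abs_mul, abs_of_nonneg (ha0 n p.1), abs_of_nonneg (ha0 n p.2)]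
      exact mul_le_mul (mul_le_mul_of_nonneg_left (hgb _) (ha0 n p.1))
        (mul_le_mul_of_nonneg_left (hgb _) (ha0 n p.2))
        (mul_nonneg (ha0 n p.2) (abs_nonneg _)) (mul_nonneg (ha0 n p.1) hC0)
    have hbsum : Summable fun p : ℕ × ℕ => (a n p.1 * C) * (a n p.2 * C) := by
      refine Summable.mul_of_nonneg ((hsum n).mul_right C) ((hsum n).mul_right C) ?_ ?_ <;>
        · intro k
          exact mul_nonneg (ha0 n k) hC0
    have hswap : ∫ ω, (T n ω) ^ 2 ∂P = ∑' p : ℕ × ℕ,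
        ∫ ω, (a n p.1 * g (ω p.1)) * (a n p.2 * g (ω p.2)) ∂P := by
      have hb2 : (∑' p : ℕ × ℕ, ENNReal.ofReal ((a n p.1 * C) * (a n p.2 * C))) ≠ ⊤ := by
        have h := ofReal_tsum_of_nonneg (f := fun p : ℕ × ℕ => (a n p.1 * C) * (a n p.2 * C))
          (fun p => mul_nonneg (mul_nonneg (ha0 n p.1) hC0) (mul_nonneg (ha0 n p.2) hC0)) hbsum
        rw [← h]
        exact ofReal_ne_top
      simp only [hsq]
      exact integral_tsum (fun p => (hFm p).aestronglyMeasurable)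
        (ne_top_of_le_ne_top hb2 (ENNReal.tsum_le_tsum fun p => hlb _ _ (hFb p)))
    have hJ : ∀ p : ℕ × ℕ, ∫ ω, (a n p.1 * g (ω p.1)) * (a n p.2 * g (ω p.2)) ∂P =
        if p.1 = p.2 then a n p.1 ^ 2 * V else 0 := by
      rintro ⟨j, k⟩
      by_cases hjk : j = k
      · subst hjk
        simp only [if_pos rfl]
        have : (fun ω : ℕ → X => (a n j * g (ω j)) * (a n j * g (ω j)))
            = fun ω => a n j ^ 2 * (g (ω j)) ^ 2 := by funext ω; ring
        rw [this, integral_const_mul, hgP2 j]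
        simp
      · simp only [if_neg hjk]
        have hre : (fun ω : ℕ → X => (a n j * g (ω j)) * (a n k * g (ω k)))
            = fun ω => (a n j * a n k) * ((g ∘ fun ω : ℕ → X => ω j) * (g ∘ fun ω : ℕ → X => ω k)) ω := by
          funext ω; simp [Function.comp]; ring
        rw [hre, integral_const_mul]
        have hind : ProbabilityTheory.IndepFun (g ∘ fun ω : ℕ → X => ω j) (g ∘ fun ω : ℕ → X => ω k) P :=
          (hiid.indepFun hjk).comp hgm hgm
        rw [hind.integral_mul_eq_mul_integral ((hXm j).aestronglyMeasurable) ((hXm k).aestronglyMeasurable)]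
        have h1 : integral P (g ∘ fun ω : ℕ → X => ω j) = 0 := hgP j
        have h2 : integral P (g ∘ fun ω : ℕ → X => ω k) = 0 := hgP k
        rw [h1, h2]
        ring
    rw [hswap]
    simp only [hJ]
    have hdiag : ∑' p : ℕ × ℕ, (if p.1 = p.2 then a n p.1 ^ 2 * V else 0)
        = ∑' k, a n k ^ 2 * V := by
      rw [← Function.Injective.tsum_eq (g := fun k : ℕ => ((k, k) : ℕ × ℕ))
        (fun x y h => by simpa using h)
        (f := fun p : ℕ × ℕ => if p.1 = p.2 then a n p.1 ^ 2 * V else 0) ?_]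
      · simp
      · intro p hp
        simp only [Function.mem_support, ne_eq, ite_eq_right_iff, not_forall] at hp
        obtain ⟨h, -⟩ := hp
        exact ⟨p.1, Prod.ext rfl h⟩
    rw [hdiag, tsum_mul_right]
  -- summability of variances
  set c : ℕ → ℝ := fun n => ∑' k, a n k ^ 2 with hc
  have hc0 : ∀ n, 0 ≤ c n := fun n => tsum_nonneg fun k => sq_nonneg _
  have hcs : Summable c := ((summable_prod_of_nonneg (fun p => sq_nonneg _)).mp ha2).2
  have hTint : ∀ n, Integrable (fun ω => (T n ω) ^ 2) P := by
    intro n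
    refine (integrable_const (C ^ 2)).mono' ((hTmeas n).pow_const 2).aestronglyMeasurable ?_
    refine Eventually.of_forall fun ω => ?_
    rw [Real.norm_eq_abs, abs_of_nonneg (sq_nonneg _), ← sq_abs]
    exact pow_le_pow_left₀ (abs_nonneg _) (hTb n ω) 2
  have hlint : ∀ n, ∫⁻ ω, ENNReal.ofReal ((T n ω) ^ 2) ∂P = ENNReal.ofReal (c n * V) := by
    intro n
    rw [← ofReal_integral_eq_lintegral_ofReal (hTint n)
      (Eventually.of_forall fun ω => sq_nonneg _), hVar n]
  have hfin : ∫⁻ ω, ∑' n, ENNReal.ofReal ((T n ω) ^ 2) ∂P ≠ ⊤ := by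
    rw [lintegral_tsum (f := fun n ω => ENNReal.ofReal ((T n ω) ^ 2))
      (fun n => (ENNReal.measurable_ofReal.comp ((hTmeas n).pow_const 2)).aemeasurable)]
    simp only [hlint]
    have h := ofReal_tsum_of_nonneg (f := fun n => c n * V)
      (fun n => mul_nonneg (hc0 n) hV0) (hcs.mul_right V)
    rw [← h]
    exact ofReal_ne_top
  have hae : ∀ᵐ ω ∂P, (∑' n, ENNReal.ofReal ((T n ω) ^ 2)) < ⊤ :=
    ae_lt_top (Measurable.ennreal_tsum fun n =>
      ENNReal.measurable_ofReal.comp ((hTmeas n).pow_const 2)) hfin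
  filter_upwards [hae] with ω hω
  have hsummT : Summable fun n => (T n ω) ^ 2 := by
    have hs := ENNReal.summable_toReal hω.ne
    have he : (fun n => (ENNReal.ofReal ((T n ω) ^ 2)).toReal) = fun n => (T n ω) ^ 2 :=
      funext fun n => ENNReal.toReal_ofReal (sq_nonneg _)
    rwa [he] at hs
  have habs : Tendsto (fun n => |T n ω|) atTop (nhds 0) := by
    have h2 := hsummT.tendsto_atTop_zero
    have h3 := (Real.continuous_sqrt.tendsto 0).comp h2
    simpa [Function.comp_def, Real.sqrt_sq_eq_abs] using h3
  have hT0 : Tendsto (fun n => T n ω) atTop (nhds 0) := by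
    have h1 : Tendsto (fun n => -|T n ω|) atTop (nhds 0) := by simpa using habs.neg
    exact tendsto_of_tendsto_of_tendsto_of_le_of_le h1 habs
      (fun n => neg_abs_le _) (fun n => le_abs_self _)
  have heq : ∀ n, ∑' k, a n k * f (ω k) = m + T n ω := by
    intro n
    have h1 : Summable fun k => a n k * m := (hsum n).mul_right m
    have h0 : (fun k => a n k * f (ω k)) = fun k => a n k * m + a n k * g (ω k) := by
      funext k
      simp only [hgdef]
      ring
    rw [h0, Summable.tsum_add h1 (hsummg n ω), tsum_mul_right, ha1 n, one_mul]
  rw [show (fun n => ∑' k, a n k * f (ω k)) = fun n => m + T n ω from funext heq]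
  simpa using tendsto_const_nhds.add hT0

lemma aux_int {X : Type*} [MetricSpace X] [CompactSpace X] [MeasurableSpace X] [BorelSpace X]
    (a : ℕ → ℝ) (ha0 : ∀ k, 0 ≤ a k) (ha1 : ∑' k, a k = 1) (ω : ℕ → X) (f : C(X, ℝ)) :
    ∫ x, f x ∂(Measure.sum fun k => ENNReal.ofReal (a k) • Measure.dirac (ω k))
      = ∑' k, a k * f (ω k) := by
  have hsa : Summable a := by
    by_contra h
    rw [tsum_eq_zero_of_not_summable h] at ha1
    norm_num at ha1
  set ν := Measure.sum fun k => ENNReal.ofReal (a k) • Measure.dirac (ω k) with hν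
  have hνuniv : ν Set.univ = 1 := by
    rw [hν, Measure.sum_apply _ MeasurableSet.univ]
    have : ∀ k : ℕ, (ENNReal.ofReal (a k) • Measure.dirac (ω k)) Set.univ
        = ENNReal.ofReal (a k) := by
      intro k
      simp [Measure.smul_apply]
    simp only [this]
    rw [← ofReal_tsum_of_nonneg ha0 hsa, ha1, ofReal_one]
  haveI : IsProbabilityMeasure ν := ⟨hνuniv⟩
  have hint : Integrable f ν :=
    (integrable_const ‖f‖).mono' f.continuous.measurable.aestronglyMeasurable
      (Filter.Eventually.of_forall fun x => f.norm_coe_le_norm x)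
  rw [show ∫ x, f x ∂ν = ∑' k, ∫ x, f x ∂(ENNReal.ofReal (a k) • Measure.dirac (ω k)) from
    integral_sum_measure hint]
  congr 1
  funext k
  rw [integral_smul_measure, integral_dirac _ _, ENNReal.toReal_ofReal (ha0 k), smul_eq_mul]

/-- **Lemma.** Let `μ` be a Borel probability measure on a compact metric space `X` and
`P = μ^ℕ` on `Ω = X^ℕ` (characterized as the unique probability measure making the
coordinates i.i.d. with law `μ`). Let `(a_{n,k})` be non-negative with `∑_k a_{n,k} = 1`
for every `n` and `∑_{n,k} a_{n,k}² < ∞`. Then for `P`-a.e. `ω`, the measures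
`μ_n^ω = ∑_k a_{n,k} δ_{ω_k}` converge weak-* to `μ`. -/
theorem random_discrete_measures_converge
    {X : Type*} [MetricSpace X] [CompactSpace X] [MeasurableSpace X] [BorelSpace X]
    (μ : Measure X) [IsProbabilityMeasure μ]
    (P : Measure (ℕ → X)) [IsProbabilityMeasure P]
    (hiid : ProbabilityTheory.iIndepFun
      (fun k (ω : ℕ → X) => ω k) P)
    (hlaw : ∀ k, P.map (fun ω => ω k) = μ)
    (a : ℕ → ℕ → ℝ) (ha0 : ∀ n k, 0 ≤ a n k) (ha1 : ∀ n, ∑' k, a n k = 1)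
    (ha2 : Summable fun p : ℕ × ℕ => a p.1 p.2 ^ 2) :
    ∀ᵐ ω ∂P, ∀ f : C(X, ℝ),
      Filter.Tendsto
        (fun n => ∫ x, f x ∂(Measure.sum fun k =>
          ENNReal.ofReal (a n k) • Measure.dirac (ω k)))
        Filter.atTop (nhds (∫ x, f x ∂μ)) := by
  classical
  have hsum : ∀ n, Summable (a n) := by
    intro n
    by_contra h
    have h1 := ha1 n
    rw [tsum_eq_zero_of_not_summable h] at h1
    norm_num at h1
  have hint : ∀ u : C(X, ℝ), Integrable u μ := fun u =>
    (integrable_const ‖u‖).mono' u.continuous.measurable.aestronglyMeasurable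
      (Eventually.of_forall fun x => u.norm_coe_le_norm x)
  suffices h : ∀ᵐ ω ∂P, ∀ f : C(X, ℝ),
      Tendsto (fun n => ∑' k, a n k * f (ω k)) atTop (nhds (∫ x, f x ∂μ)) by
    filter_upwards [h] with ω hω f
    have he : (fun n => ∫ x, f x ∂(Measure.sum fun k =>
        ENNReal.ofReal (a n k) • Measure.dirac (ω k)))
        = fun n => ∑' k, a n k * f (ω k) :=
      funext fun n => aux_int (a n) (ha0 n) (ha1 n) ω f
    rw [he]
    exact hω f
  obtain ⟨D, hDc, hDd⟩ := TopologicalSpace.exists_countable_dense C(X, ℝ)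
  have hkey : ∀ᵐ ω ∂P, ∀ f ∈ D,
      Tendsto (fun n => ∑' k, a n k * f (ω k)) atTop (nhds (∫ x, f x ∂μ)) :=
    (ae_ball_iff hDc).mpr fun f _ => aux_key μ P hiid hlaw a ha0 ha1 ha2 f
  filter_upwards [hkey] with ω hω f
  have hS : ∀ (u : C(X, ℝ)) n, Summable fun k => a n k * u (ω k) := by
    intro u n
    refine Summable.of_norm_bounded ((hsum n).mul_right ‖u‖) ?_
    intro k
    rw [Real.norm_eq_abs, abs_mul, abs_of_nonneg (ha0 n k)]
    exact mul_le_mul_of_nonneg_left (u.norm_coe_le_norm (ω k)) (ha0 n k)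
  have hb1 : ∀ (u v : C(X, ℝ)) n,
      |(∑' k, a n k * u (ω k)) - ∑' k, a n k * v (ω k)| ≤ dist u v := by
    intro u v n
    rw [← Summable.tsum_sub (hS u n) (hS v n)]
    have he : ∀ k, a n k * u (ω k) - a n k * v (ω k) = a n k * (u (ω k) - v (ω k)) :=
      fun k => by ring
    simp only [he]
    have hhs : HasSum (fun k => a n k * dist u v) (dist u v) := by
      have := (hsum n).hasSum.mul_right (dist u v)
      rwa [ha1 n, one_mul] at this
    have := tsum_of_norm_bounded (f := fun k => a n k * (u (ω k) - v (ω k))) hhs ?_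
    · simpa using this
    · intro k
      rw [Real.norm_eq_abs, abs_mul, abs_of_nonneg (ha0 n k)]
      refine mul_le_mul_of_nonneg_left ?_ (ha0 n k)
      have := ContinuousMap.dist_apply_le_dist (f := u) (g := v) (ω k)
      rwa [Real.dist_eq] at this
  have hb3 : ∀ u v : C(X, ℝ), dist (∫ x, u x ∂μ) (∫ x, v x ∂μ) ≤ dist u v := by
    intro u v
    rw [Real.dist_eq, ← integral_sub (hint u) (hint v)]
    have := norm_integral_le_of_norm_le_const (μ := μ)
      (f := fun x => u x - v x) (C := dist u v) (Eventually.of_forall fun x => by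
        have := ContinuousMap.dist_apply_le_dist (f := u) (g := v) x
        rwa [Real.dist_eq, ← Real.norm_eq_abs] at this)
    simpa [measure_univ] using this
  rw [Metric.tendsto_atTop]
  intro ε hε
  obtain ⟨g, hgD, hgf⟩ := Metric.mem_closure_iff.mp (hDd f) (ε / 3) (by positivity)
  obtain ⟨N, hN⟩ := Metric.tendsto_atTop.mp (hω g hgD) (ε / 3) (by positivity)
  refine ⟨N, fun n hn => ?_⟩
  have h2 := hN n hn
  have h1 := hb1 f g n
  have h3 := hb3 g f
  have htri := dist_triangle4 (∑' k, a n k * f (ω k)) (∑' k, a n k * g (ω k))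
    (∫ x, g x ∂μ) (∫ x, f x ∂μ)
  have hd1 : dist (∑' k, a n k * f (ω k)) (∑' k, a n k * g (ω k)) ≤ dist f g := by
    rw [Real.dist_eq]; exact h1
  calc dist (∑' k, a n k * f (ω k)) (∫ x, f x ∂μ)
      ≤ dist (∑' k, a n k * f (ω k)) (∑' k, a n k * g (ω k))
        + dist (∑' k, a n k * g (ω k)) (∫ x, g x ∂μ)
        + dist (∫ x, g x ∂μ) (∫ x, f x ∂μ) := htri
    _ < ε := by
        have hgf' : dist g f < ε / 3 := by rwa [dist_comm]
        linarith [hd1.trans_lt hgf, h3.trans_lt hgf']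
end

section
/- Let (ξ_n) be a sequence of independent non-negative random variables. Then almost surely liminf_{n→∞} ξ_n ≤ liminf_{n→∞} E[ξ_n]. -/
open MeasureTheory ENNReal

/-- **Lemma.** Let `(ξ_n)` be a sequence of independent non-negative random variables
(with finite expectations). Then almost surely
`liminf_n ξ_n ≤ liminf_n E[ξ_n]`, where `liminf` is taken in `[0,∞]`. -/
theorem liminf_le_liminf_expectation
    {Ω : Type*} [MeasurableSpace Ω] (P : Measure Ω) [IsProbabilityMeasure P]
    (ξ : ℕ → Ω → ℝ≥0∞) (hmeas : ∀ n, Measurable (ξ n))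
    (hindep : ProbabilityTheory.iIndepFun ξ P)
    (hfin : ∀ n, ∫⁻ ω, ξ n ω ∂P < ∞) :
    ∀ᵐ ω ∂P, Filter.liminf (fun n => ξ n ω) Filter.atTop ≤
      Filter.liminf (fun n => ∫⁻ ω', ξ n ω' ∂P) Filter.atTop := by
  set L := Filter.liminf (fun n => ∫⁻ ω', ξ n ω' ∂P) Filter.atTop with hLdef
  rcases eq_or_ne L ∞ with hL | hL
  · filter_upwards with ω; rw [hL]; exact le_top
  set f := fun ω => Filter.liminf (fun n => ξ n ω) Filter.atTop with hfdef
  have hf : Measurable f := Measurable.liminf hmeas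
  have hFatou : ∫⁻ ω, f ω ∂P ≤ L := lintegral_liminf_le hmeas
  -- the event {f ≤ L} is tail measurable
  have htail : MeasurableSet[Filter.limsup
      (fun n => MeasurableSpace.comap (ξ n) inferInstance) Filter.atTop] {ω | f ω ≤ L} := by
    rw [Filter.limsup_eq_iInf_iSup_of_nat, MeasurableSpace.measurableSet_iInf]
    intro n
    have hg : Measurable[⨆ i ≥ n, MeasurableSpace.comap (ξ i) inferInstance]
        (fun ω => Filter.liminf (fun k => ξ (k + n) ω) Filter.atTop) := by
      refine Measurable.liminf fun k => ?_
      have hle : MeasurableSpace.comap (ξ (k + n)) inferInstance ≤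
          ⨆ i ≥ n, MeasurableSpace.comap (ξ i) inferInstance :=
        le_iSup₂ (f := fun i (_ : i ≥ n) => MeasurableSpace.comap (ξ i) inferInstance)
          (k + n) (Nat.le_add_left n k)
      exact fun s hs => hle _ (MeasurableSpace.measurableSet_comap.2 ⟨s, hs, rfl⟩)
    have heq : {ω | f ω ≤ L} =
        (fun ω => Filter.liminf (fun k => ξ (k + n) ω) Filter.atTop) ⁻¹' Set.Iic L := by
      ext ω
      simp only [Set.mem_setOf_eq, Set.mem_preimage, Set.mem_Iic, hfdef,
        Filter.liminf_nat_add (fun k => ξ k ω) n]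
    rw [heq]
    exact hg measurableSet_Iic
  have h01 := ProbabilityTheory.measure_zero_or_one_of_measurableSet_limsup_atTop
    (fun n => (hmeas n).comap_le) hindep htail
  have hms : MeasurableSet {ω | f ω ≤ L} := hf measurableSet_Iic
  rcases h01 with h0 | h1
  · -- contradiction case: a.s. L < f, but ∫ f ≤ L < ∞
    exfalso
    have hgt : ∀ᵐ ω ∂P, L < f ω := by
      rw [ae_iff]
      simpa only [not_lt] using h0
    have hge : ∀ᵐ ω ∂P, L ≤ f ω := hgt.mono fun ω h => h.le
    have hsub : ∫⁻ ω, (f ω - L) ∂P = ∫⁻ ω, f ω ∂P - L := by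
      have := lintegral_sub (f := f) (g := fun _ => L) measurable_const
        (by simp [hL]) hge
      simpa using this
    have hzero : ∫⁻ ω, (f ω - L) ∂P = 0 := by
      rw [hsub]
      exact tsub_eq_zero_of_le hFatou
    have : ∀ᵐ ω ∂P, f ω - L = 0 :=
      (lintegral_eq_zero_iff (hf.sub measurable_const)).1 hzero
    have hcontra : ∀ᵐ ω ∂P, False := by
      filter_upwards [this, hgt] with ω h1 h2
      exact absurd (tsub_eq_zero_iff_le.1 h1) (not_le.2 h2)
    have := hcontra.frequently.exists
    exact this.elim fun _ h => h
  · rw [ae_iff]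
    have : {ω | ¬ f ω ≤ L} = {ω | f ω ≤ L}ᶜ := rfl
    rw [this, measure_compl hms (measure_ne_top P _), h1, measure_univ, tsub_self]
end

section
/- There is an absolute constant C such that for all r₁, r₂ > 0, all ρ ∈ [0, r₁] and all a > 0, the Lebesgue measure of A ∩ B(a) is at most C · min(a⁴, r₁²a², r₁²r₂²), where A = [−2r₁, 2r₁] × [−2r₁, 2r₁] × [−2r₂², 2r₂²] and B(a) = {(x,y,z) ∈ ℝ³ : |x| ≤ a, |y| ≤ a, |z − 2ρy| ≤ a²}. -/
open MeasureTheory ENNReal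

lemma slab_vol (c m h : ℝ) (hm : 0 ≤ m) (hh : 0 ≤ h) :
    volume {q : ℝ × ℝ | |q.1| ≤ m ∧ |q.2 - c * q.1| ≤ h} ≤
      ENNReal.ofReal (2 * m) * ENNReal.ofReal (2 * h) := by
  have hmeas : MeasurableSet {q : ℝ × ℝ | |q.1| ≤ m ∧ |q.2 - c * q.1| ≤ h} := by
    apply MeasurableSet.inter
    · exact measurableSet_le measurable_fst.abs measurable_const
    · exact measurableSet_le ((measurable_snd.sub (measurable_fst.const_mul c)).abs)
        measurable_const
  rw [show (volume : Measure (ℝ × ℝ)) = (volume : Measure ℝ).prod volume from rfl,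
    Measure.prod_apply hmeas]
  calc ∫⁻ y, volume (Prod.mk y ⁻¹' {q : ℝ × ℝ | |q.1| ≤ m ∧ |q.2 - c * q.1| ≤ h})
      ≤ ∫⁻ y, (Set.Icc (-m) m).indicator (fun _ => ENNReal.ofReal (2 * h)) y := by
        apply lintegral_mono
        intro y
        dsimp only
        by_cases hy : |y| ≤ m
        · have hset : Prod.mk y ⁻¹' {q : ℝ × ℝ | |q.1| ≤ m ∧ |q.2 - c * q.1| ≤ h}
              = Set.Icc (c * y - h) (c * y + h) := by
            ext z
            constructor
            · intro hz
              have h2 := abs_le.mp hz.2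
              rw [Set.mem_Icc]
              constructor <;> linarith [h2.1, h2.2]
            · intro hz
              rw [Set.mem_Icc] at hz
              exact ⟨hy, abs_le.mpr ⟨by linarith [hz.1], by linarith [hz.2]⟩⟩
          rw [hset, Real.volume_Icc,
            Set.indicator_of_mem (by rw [Set.mem_Icc, ← abs_le]; exact hy)]
          apply le_of_eq; congr 1; ring
        · have hset : Prod.mk y ⁻¹' {q : ℝ × ℝ | |q.1| ≤ m ∧ |q.2 - c * q.1| ≤ h} = ∅ := by
            ext z; simp [hy]
          simp [hset]
    _ = ENNReal.ofReal (2 * m) * ENNReal.ofReal (2 * h) := by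
        rw [lintegral_indicator_const measurableSet_Icc, Real.volume_Icc]
        rw [mul_comm]; congr 1; ring


/-- **Sublemma.** There is an absolute constant `C` such that for all `r₁, r₂ > 0`,
`ρ ∈ [0, r₁]` and `a > 0`, the Lebesgue measure of `A ∩ B(a)` is at most
`C · min(a⁴, r₁²a², r₁²r₂²)`, where `A = [−2r₁,2r₁] × [−2r₁,2r₁] × [−2r₂²,2r₂²]` and
`B(a) = {(x,y,z) : |x| ≤ a, |y| ≤ a, |z − 2ρy| ≤ a²}`. -/
theorem box_slab_intersection_volume_bound :
    ∃ C : ℝ, 0 < C ∧ ∀ r₁ r₂ ρ a : ℝ, 0 < r₁ → 0 < r₂ → 0 ≤ ρ → ρ ≤ r₁ → 0 < a →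
      volume {p : ℝ × ℝ × ℝ |
          (|p.1| ≤ 2 * r₁ ∧ |p.2.1| ≤ 2 * r₁ ∧ |p.2.2| ≤ 2 * r₂ ^ 2) ∧
          (|p.1| ≤ a ∧ |p.2.1| ≤ a ∧ |p.2.2 - 2 * ρ * p.2.1| ≤ a ^ 2)}
        ≤ ENNReal.ofReal (C * min (a ^ 4) (min (r₁ ^ 2 * a ^ 2) (r₁ ^ 2 * r₂ ^ 2))) := by
  refine ⟨64, by norm_num, fun r₁ r₂ ρ a hr₁ hr₂ hρ hρr₁ ha => ?_⟩
  set S := {p : ℝ × ℝ × ℝ |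
      (|p.1| ≤ 2 * r₁ ∧ |p.2.1| ≤ 2 * r₁ ∧ |p.2.2| ≤ 2 * r₂ ^ 2) ∧
      (|p.1| ≤ a ∧ |p.2.1| ≤ a ∧ |p.2.2 - 2 * ρ * p.2.1| ≤ a ^ 2)} with hS
  have ha2 : (0:ℝ) ≤ a ^ 2 := sq_nonneg a
  -- generic bound: S ⊆ Icc (-m₁) m₁ ×ˢ slab(m₂)
  have key : ∀ m₁ m₂ : ℝ, 0 ≤ m₁ → 0 ≤ m₂ →
      (∀ p ∈ S, |p.1| ≤ m₁) → (∀ p ∈ S, |p.2.1| ≤ m₂) →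
      volume S ≤ ENNReal.ofReal (2 * m₁) * (ENNReal.ofReal (2 * m₂) * ENNReal.ofReal (2 * a ^ 2)) := by
    intro m₁ m₂ hm₁ hm₂ h1 h2
    have hsub : S ⊆ (Set.Icc (-m₁) m₁) ×ˢ
        {q : ℝ × ℝ | |q.1| ≤ m₂ ∧ |q.2 - (2 * ρ) * q.1| ≤ a ^ 2} := by
      intro p hp
      refine ⟨by rw [Set.mem_Icc, ← abs_le]; exact h1 p hp, h2 p hp, ?_⟩
      have := hp.2.2.2
      convert this using 3 <;> ring
    calc volume S ≤ volume ((Set.Icc (-m₁) m₁) ×ˢ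
        {q : ℝ × ℝ | |q.1| ≤ m₂ ∧ |q.2 - (2 * ρ) * q.1| ≤ a ^ 2}) := measure_mono hsub
      _ = volume (Set.Icc (-m₁) m₁) *
          volume {q : ℝ × ℝ | |q.1| ≤ m₂ ∧ |q.2 - (2 * ρ) * q.1| ≤ a ^ 2} := by
          rw [show (volume : Measure (ℝ × (ℝ × ℝ))) = (volume : Measure ℝ).prod volume from rfl,
            Measure.prod_prod]
      _ ≤ ENNReal.ofReal (2 * m₁) * (ENNReal.ofReal (2 * m₂) * ENNReal.ofReal (2 * a ^ 2)) := by
          gcongr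
          · rw [Real.volume_Icc]; apply le_of_eq; congr 1; ring
          · exact slab_vol (2 * ρ) m₂ (a ^ 2) hm₂ ha2
  have b1 : volume S ≤ ENNReal.ofReal (8 * a ^ 4) := by
    refine (key a a ha.le ha.le (fun p hp => hp.2.1) (fun p hp => hp.2.2.1)).trans ?_
    rw [← ENNReal.ofReal_mul (by positivity), ← ENNReal.ofReal_mul (by positivity)]
    apply ENNReal.ofReal_le_ofReal; nlinarith [sq_nonneg a]
  have b2 : volume S ≤ ENNReal.ofReal (32 * (r₁ ^ 2 * a ^ 2)) := by
    refine (key (2 * r₁) (2 * r₁) (by positivity) (by positivity)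
      (fun p hp => hp.1.1) (fun p hp => hp.1.2.1)).trans ?_
    rw [← ENNReal.ofReal_mul (by positivity), ← ENNReal.ofReal_mul (by positivity)]
    apply ENNReal.ofReal_le_ofReal; nlinarith
  have b3 : volume S ≤ ENNReal.ofReal (64 * (r₁ ^ 2 * r₂ ^ 2)) := by
    have hsub : S ⊆ (Set.Icc (-(2*r₁)) (2*r₁)) ×ˢ
        ((Set.Icc (-(2*r₁)) (2*r₁)) ×ˢ (Set.Icc (-(2*r₂^2)) (2*r₂^2))) := by
      intro p hp
      refine ⟨?_, ?_, ?_⟩ <;> rw [Set.mem_Icc, ← abs_le]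
      exacts [hp.1.1, hp.1.2.1, hp.1.2.2]
    refine (measure_mono hsub).trans ?_
    rw [show (volume : Measure (ℝ × (ℝ × ℝ))) = (volume : Measure ℝ).prod volume from rfl,
      Measure.prod_prod,
      show (volume : Measure (ℝ × ℝ)) = (volume : Measure ℝ).prod volume from rfl,
      Measure.prod_prod]
    simp only [Real.volume_Icc]
    rw [← ENNReal.ofReal_mul (by linarith), ← ENNReal.ofReal_mul (by linarith)]
    apply ENNReal.ofReal_le_ofReal; nlinarith
  -- combine
  rcases le_total (a ^ 4) (min (r₁ ^ 2 * a ^ 2) (r₁ ^ 2 * r₂ ^ 2)) with hmin | hmin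
  · rw [min_eq_left hmin]
    exact b1.trans (ENNReal.ofReal_le_ofReal (by nlinarith [pow_pos ha 4]))
  · rw [min_eq_right hmin]
    rcases le_total (r₁ ^ 2 * a ^ 2) (r₁ ^ 2 * r₂ ^ 2) with h2 | h2
    · rw [min_eq_left h2]
      exact b2.trans (ENNReal.ofReal_le_ofReal (by nlinarith))
    · rw [min_eq_right h2]; exact b3
end

section
/- There is an absolute constant C such that for all r₁, r₂ > 0, all ρ ∈ (0, r₁] and all a > 0, the Lebesgue measure of A ∩ B(a) is at most C · min(a⁴, r₂²a³/ρ, r₁r₂²a, r₁²r₂²), where A = [−2r₁, 2r₁] × [−2r₁, 2r₁] × [−2r₂², 2r₂²] and B(a) = {(x,y,z) ∈ ℝ³ : |x| ≤ a, |y| ≤ a, |z − 2ρy| ≤ a²}. -/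
open MeasureTheory ENNReal

open Set
lemma interval_eq (m r : ℝ) : {z : ℝ | |z - m| ≤ r} = Icc (m - r) (m + r) := by
  ext z
  simp only [mem_setOf_eq, abs_le, mem_Icc]
  constructor <;> intro h <;> constructor <;> linarith [h.1, h.2]

lemma interval_vol (m r : ℝ) : volume {z : ℝ | |z - m| ≤ r} = ENNReal.ofReal (2 * r) := by
  rw [interval_eq, Real.volume_Icc]
  ring_nf

lemma slice1 (ρ b a : ℝ) :
    volume {q : ℝ × ℝ | |q.1| ≤ b ∧ |q.2 - 2 * ρ * q.1| ≤ a ^ 2} ≤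
      ENNReal.ofReal (2 * b) * ENNReal.ofReal (2 * a ^ 2) := by
  have hmeas : MeasurableSet {q : ℝ × ℝ | |q.1| ≤ b ∧ |q.2 - 2 * ρ * q.1| ≤ a ^ 2} := by
    rw [setOf_and]
    exact ((isClosed_le (by continuity) continuous_const).measurableSet).inter
      ((isClosed_le (by continuity) continuous_const).measurableSet)
  rw [Measure.volume_eq_prod, Measure.prod_apply hmeas]
  have hb : ∀ y : ℝ,
      volume (Prod.mk y ⁻¹' {q : ℝ × ℝ | |q.1| ≤ b ∧ |q.2 - 2 * ρ * q.1| ≤ a ^ 2}) ≤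
        (Icc (-b) b).indicator (fun _ => ENNReal.ofReal (2 * a ^ 2)) y := by
    intro y
    by_cases hy : y ∈ Icc (-b) b
    · rw [indicator_of_mem hy]
      refine le_trans (measure_mono ?_) (interval_vol (2 * ρ * y) (a ^ 2)).le
      intro z hz; exact hz.2
    · rw [indicator_of_notMem hy]
      have : (Prod.mk y ⁻¹' {q : ℝ × ℝ | |q.1| ≤ b ∧ |q.2 - 2 * ρ * q.1| ≤ a ^ 2}) = ∅ := by
        ext z
        simp only [mem_preimage, mem_setOf_eq, mem_empty_iff_false, iff_false, not_and]
        intro h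
        exact absurd (abs_le.mp h) (by simpa [mem_Icc] using hy)
      rw [this, measure_empty]
  calc ∫⁻ y, volume (Prod.mk y ⁻¹' _) ≤
      ∫⁻ y, (Icc (-b) b).indicator (fun _ => ENNReal.ofReal (2 * a ^ 2)) y :=
        lintegral_mono hb
    _ = ENNReal.ofReal (2 * a ^ 2) * volume (Icc (-b : ℝ) b) := by
        rw [lintegral_indicator measurableSet_Icc, setLIntegral_const]
    _ = ENNReal.ofReal (2 * b) * ENNReal.ofReal (2 * a ^ 2) := by
        rw [Real.volume_Icc, mul_comm]; ring_nf

lemma slice2 (ρ c a : ℝ) (hρ : 0 < ρ) :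
    volume {q : ℝ × ℝ | |q.2| ≤ c ∧ |q.2 - 2 * ρ * q.1| ≤ a ^ 2} ≤
      ENNReal.ofReal (2 * c) * ENNReal.ofReal (a ^ 2 / ρ) := by
  have h2ρ : (0:ℝ) < 2 * ρ := by linarith
  have hmeas : MeasurableSet {q : ℝ × ℝ | |q.2| ≤ c ∧ |q.2 - 2 * ρ * q.1| ≤ a ^ 2} := by
    rw [setOf_and]
    exact ((isClosed_le (by continuity) continuous_const).measurableSet).inter
      ((isClosed_le (by continuity) continuous_const).measurableSet)
  rw [Measure.volume_eq_prod, Measure.prod_apply_symm hmeas]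
  have hb : ∀ z : ℝ,
      volume ((fun y => (y, z)) ⁻¹' {q : ℝ × ℝ | |q.2| ≤ c ∧ |q.2 - 2 * ρ * q.1| ≤ a ^ 2}) ≤
        (Icc (-c) c).indicator (fun _ => ENNReal.ofReal (a ^ 2 / ρ)) z := by
    intro z
    by_cases hz : z ∈ Icc (-c) c
    · rw [indicator_of_mem hz]
      have hsub : ((fun y => (y, z)) ⁻¹' {q : ℝ × ℝ | |q.2| ≤ c ∧ |q.2 - 2 * ρ * q.1| ≤ a ^ 2}) ⊆
          {y : ℝ | |y - z / (2 * ρ)| ≤ a ^ 2 / (2 * ρ)} := by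
        intro y hy
        have h2 : |z - 2 * ρ * y| ≤ a ^ 2 := hy.2
        have heq : y - z / (2 * ρ) = -((z - 2 * ρ * y) / (2 * ρ)) := by
          field_simp
          ring
        rw [mem_setOf_eq, heq, abs_neg, abs_div, abs_of_pos h2ρ]
        gcongr
      refine le_trans (measure_mono hsub) ?_
      rw [interval_vol]
      apply ENNReal.ofReal_le_ofReal
      rw [mul_div_assoc']
      rw [div_le_div_iff₀ h2ρ hρ]
      ring_nf
      nlinarith [sq_nonneg a]
    · rw [indicator_of_notMem hz]
      have : ((fun y => (y, z)) ⁻¹' {q : ℝ × ℝ | |q.2| ≤ c ∧ |q.2 - 2 * ρ * q.1| ≤ a ^ 2}) = ∅ := by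
        ext y
        simp only [mem_preimage, mem_setOf_eq, mem_empty_iff_false, iff_false, not_and]
        intro h
        exact absurd (abs_le.mp h) (by simpa [mem_Icc] using hz)
      rw [this, measure_empty]
  calc ∫⁻ z, volume ((fun y => (y, z)) ⁻¹' _) ≤
      ∫⁻ z, (Icc (-c) c).indicator (fun _ => ENNReal.ofReal (a ^ 2 / ρ)) z :=
        lintegral_mono hb
    _ = ENNReal.ofReal (a ^ 2 / ρ) * volume (Icc (-c : ℝ) c) := by
        rw [lintegral_indicator measurableSet_Icc, setLIntegral_const]
    _ = ENNReal.ofReal (2 * c) * ENNReal.ofReal (a ^ 2 / ρ) := by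
        rw [Real.volume_Icc, mul_comm]; ring_nf

lemma box_vol (b₁ b₂ b₃ : ℝ) :
    volume (Icc (-b₁) b₁ ×ˢ (Icc (-b₂) b₂ ×ˢ Icc (-b₃) b₃) : Set (ℝ × ℝ × ℝ)) =
      ENNReal.ofReal (2 * b₁) * (ENNReal.ofReal (2 * b₂) * ENNReal.ofReal (2 * b₃)) := by
  rw [Measure.volume_eq_prod, Measure.prod_prod, Measure.volume_eq_prod, Measure.prod_prod,
    Real.volume_Icc, Real.volume_Icc, Real.volume_Icc]
  norm_num
  ring_nf
  simp only [ENNReal.ofReal_mul' (by norm_num : (0:ℝ) ≤ 2), ENNReal.ofReal_ofNat]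
  ring

/-- **Sublemma.** There is an absolute constant `C` such that for all `r₁, r₂ > 0`,
`ρ ∈ (0, r₁]` and `a > 0`, the Lebesgue measure of `A ∩ B(a)` is at most
`C · min(a⁴, r₂²a³/ρ, r₁r₂²a, r₁²r₂²)`, where
`A = [−2r₁,2r₁] × [−2r₁,2r₁] × [−2r₂²,2r₂²]` and
`B(a) = {(x,y,z) : |x| ≤ a, |y| ≤ a, |z − 2ρy| ≤ a²}`. -/
theorem box_slab_intersection_volume_bound' :
    ∃ C : ℝ, 0 < C ∧ ∀ r₁ r₂ ρ a : ℝ, 0 < r₁ → 0 < r₂ → 0 < ρ → ρ ≤ r₁ → 0 < a →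
      volume {p : ℝ × ℝ × ℝ |
          (|p.1| ≤ 2 * r₁ ∧ |p.2.1| ≤ 2 * r₁ ∧ |p.2.2| ≤ 2 * r₂ ^ 2) ∧
          (|p.1| ≤ a ∧ |p.2.1| ≤ a ∧ |p.2.2 - 2 * ρ * p.2.1| ≤ a ^ 2)}
        ≤ ENNReal.ofReal (C * min (a ^ 4)
            (min (r₂ ^ 2 * a ^ 3 / ρ) (min (r₁ * r₂ ^ 2 * a) (r₁ ^ 2 * r₂ ^ 2)))) := by
  refine ⟨64, by norm_num, fun r₁ r₂ ρ a hr₁ hr₂ hρ hρr ha => ?_⟩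
  set S := {p : ℝ × ℝ × ℝ |
      (|p.1| ≤ 2 * r₁ ∧ |p.2.1| ≤ 2 * r₁ ∧ |p.2.2| ≤ 2 * r₂ ^ 2) ∧
      (|p.1| ≤ a ∧ |p.2.1| ≤ a ∧ |p.2.2 - 2 * ρ * p.2.1| ≤ a ^ 2)} with hS
  -- bound 1 : 8 a^4
  have h1 : volume S ≤ ENNReal.ofReal (8 * a ^ 4) := by
    have hsub : S ⊆ Icc (-a) a ×ˢ {q : ℝ × ℝ | |q.1| ≤ a ∧ |q.2 - 2 * ρ * q.1| ≤ a ^ 2} := by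
      rintro ⟨x, y, z⟩ ⟨_, hx, hy, hz⟩
      exact ⟨abs_le.mp hx, hy, hz⟩
    calc volume S ≤ volume (Icc (-a) a ×ˢ {q : ℝ × ℝ | |q.1| ≤ a ∧ |q.2 - 2 * ρ * q.1| ≤ a ^ 2}) :=
          measure_mono hsub
      _ = volume (Icc (-a) a) * volume {q : ℝ × ℝ | |q.1| ≤ a ∧ |q.2 - 2 * ρ * q.1| ≤ a ^ 2} := by
          rw [Measure.volume_eq_prod, Measure.prod_prod]
      _ ≤ ENNReal.ofReal (2 * a) * (ENNReal.ofReal (2 * a) * ENNReal.ofReal (2 * a ^ 2)) := by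
          rw [Real.volume_Icc]
          gcongr
          · exact le_of_eq (by congr 1; ring)
          · exact slice1 ρ a a
      _ = ENNReal.ofReal (8 * a ^ 4) := by
          rw [← ENNReal.ofReal_mul (by positivity), ← ENNReal.ofReal_mul (by positivity)]
          ring_nf
  -- bound 2 : 8 r₂² a³ / ρ
  have h2 : volume S ≤ ENNReal.ofReal (8 * (r₂ ^ 2 * a ^ 3 / ρ)) := by
    have hsub : S ⊆ Icc (-a) a ×ˢ {q : ℝ × ℝ | |q.2| ≤ 2 * r₂ ^ 2 ∧ |q.2 - 2 * ρ * q.1| ≤ a ^ 2} := by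
      rintro ⟨x, y, z⟩ ⟨⟨_, _, hz'⟩, hx, _, hz⟩
      exact ⟨abs_le.mp hx, hz', hz⟩
    calc volume S ≤ volume (Icc (-a) a ×ˢ
          {q : ℝ × ℝ | |q.2| ≤ 2 * r₂ ^ 2 ∧ |q.2 - 2 * ρ * q.1| ≤ a ^ 2}) := measure_mono hsub
      _ = volume (Icc (-a) a) *
          volume {q : ℝ × ℝ | |q.2| ≤ 2 * r₂ ^ 2 ∧ |q.2 - 2 * ρ * q.1| ≤ a ^ 2} := by
          rw [Measure.volume_eq_prod, Measure.prod_prod]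
      _ ≤ ENNReal.ofReal (2 * a) *
          (ENNReal.ofReal (2 * (2 * r₂ ^ 2)) * ENNReal.ofReal (a ^ 2 / ρ)) := by
          rw [Real.volume_Icc]
          gcongr
          · exact le_of_eq (by congr 1; ring)
          · exact slice2 ρ (2 * r₂ ^ 2) a hρ
      _ = ENNReal.ofReal (8 * (r₂ ^ 2 * a ^ 3 / ρ)) := by
          rw [← ENNReal.ofReal_mul (by positivity), ← ENNReal.ofReal_mul (by positivity)]
          congr 1
          field_simp
          ring
  -- bound 3 : 32 r₁ r₂² a
  have h3 : volume S ≤ ENNReal.ofReal (32 * (r₁ * r₂ ^ 2 * a)) := by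
    have hsub : S ⊆ Icc (-a) a ×ˢ (Icc (-(2 * r₁)) (2 * r₁) ×ˢ
        Icc (-(2 * r₂ ^ 2)) (2 * r₂ ^ 2)) := by
      rintro ⟨x, y, z⟩ ⟨⟨_, hy, hz⟩, hx, _, _⟩
      exact ⟨abs_le.mp hx, abs_le.mp hy, abs_le.mp hz⟩
    refine (measure_mono hsub).trans ?_
    rw [box_vol]
    rw [← ENNReal.ofReal_mul (by positivity), ← ENNReal.ofReal_mul (by positivity)]
    exact le_of_eq (by congr 1; ring)
  -- bound 4 : 64 r₁² r₂²
  have h4 : volume S ≤ ENNReal.ofReal (64 * (r₁ ^ 2 * r₂ ^ 2)) := by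
    have hsub : S ⊆ Icc (-(2 * r₁)) (2 * r₁) ×ˢ (Icc (-(2 * r₁)) (2 * r₁) ×ˢ
        Icc (-(2 * r₂ ^ 2)) (2 * r₂ ^ 2)) := by
      rintro ⟨x, y, z⟩ ⟨⟨hx, hy, hz⟩, _⟩
      exact ⟨abs_le.mp hx, abs_le.mp hy, abs_le.mp hz⟩
    refine (measure_mono hsub).trans ?_
    rw [box_vol]
    rw [← ENNReal.ofReal_mul (by positivity), ← ENNReal.ofReal_mul (by positivity)]
    exact le_of_eq (by congr 1; ring)
  -- combine
  have hmin : (64:ℝ) * min (a ^ 4) (min (r₂ ^ 2 * a ^ 3 / ρ)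
        (min (r₁ * r₂ ^ 2 * a) (r₁ ^ 2 * r₂ ^ 2)))
      = min (64 * a ^ 4) (min (64 * (r₂ ^ 2 * a ^ 3 / ρ))
        (min (64 * (r₁ * r₂ ^ 2 * a)) (64 * (r₁ ^ 2 * r₂ ^ 2)))) := by
    rw [mul_min_of_nonneg _ _ (by norm_num : (0:ℝ) ≤ 64),
      mul_min_of_nonneg _ _ (by norm_num : (0:ℝ) ≤ 64),
      mul_min_of_nonneg _ _ (by norm_num : (0:ℝ) ≤ 64)]
  have hmono : Monotone ENNReal.ofReal := fun _ _ h => ENNReal.ofReal_le_ofReal h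
  rw [hmin, hmono.map_min, hmono.map_min, hmono.map_min]
  refine le_min ?_ (le_min ?_ (le_min ?_ ?_))
  · exact h1.trans (ENNReal.ofReal_le_ofReal (by nlinarith [pow_pos ha 4]))
  · refine h2.trans (ENNReal.ofReal_le_ofReal ?_)
    have : (0:ℝ) ≤ r₂ ^ 2 * a ^ 3 / ρ := by positivity
    linarith
  · refine h3.trans (ENNReal.ofReal_le_ofReal ?_)
    have : (0:ℝ) ≤ r₁ * r₂ ^ 2 * a := by positivity
    linarith
  · exact h4
end
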